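/- Let X be a nonzero real Hilbert space and let G : X → X be a continuous, invertible, positive definite linear operator. Then a nonempty subset C ⊆ X satisfies C = (GC)° if and only if C = {x ∈ X : ⟨Gx, x⟩ ≤ 1}. In particular, the equation C = (GC)° has a unique nonempty solution, and this solution is the ellipsoid {x ∈ X : ⟨Gx, x⟩ ≤ 1}. -/

import Mathlib

open scoped RealInnerProductSpace

/-- The polar of a subset `C` of a real inner product space. -/
def polarSet {X : Type*} [NormedAddCommGroup X] [InnerProductSpace ℝ X]
    (C : Set X) : Set X :=
  {y : X | ∀ c ∈ C, ⟪y, c⟫ ≤ 1}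

/-- If `G` is a continuous, invertible, positive definite linear operator on a nonzero
real Hilbert space `X`, then a nonempty subset `C ⊆ X` satisfies `C = (GC)°` iff
`C = {x | ⟪Gx, x⟫ ≤ 1}`; in particular, this ellipsoid is the unique nonempty solution. -/
theorem stmt1 {X : Type*} [NormedAddCommGroup X] [InnerProductSpace ℝ X]
    [CompleteSpace X] [Nontrivial X] (G : X ≃L[ℝ] X)
    (hsa : IsSelfAdjoint (G : X →L[ℝ] X))
    (hpd : ∀ x : X, x ≠ 0 → 0 < ⟪G x, x⟫)
    (C : Set X) (hne : C.Nonempty) :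
    C = polarSet ((G : X → X) '' C) ↔ C = {x : X | ⟪G x, x⟫ ≤ 1} := by
  have hsymm : ∀ x y : X, ⟪G x, y⟫ = ⟪G y, x⟫ := by
    intro x y
    have h : ⟪G x, y⟫ = ⟪x, G y⟫ :=
      (ContinuousLinearMap.isSelfAdjoint_iff_isSymmetric.mp hsa) x y
    rw [h, real_inner_comm]
  have hnonneg : ∀ z : X, 0 ≤ ⟪G z, z⟫ := by
    intro z
    rcases eq_or_ne z 0 with rfl | hz
    · simp
    · exact (hpd z hz).le
  set E : Set X := {x : X | ⟪G x, x⟫ ≤ 1} with hEdef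
  have key : ∀ x ∈ E, ∀ y ∈ E, ⟪x, G y⟫ ≤ 1 := by
    intro x hx y hy
    have h0 : 0 ≤ ⟪G (x - y), x - y⟫ := hnonneg _
    have hexp : ⟪G (x - y), x - y⟫
        = ⟪G x, x⟫ - 2 * ⟪G y, x⟫ + ⟪G y, y⟫ := by
      simp only [map_sub, inner_sub_left, inner_sub_right]
      linarith [hsymm x y]
    have hx1 : ⟪G x, x⟫ ≤ 1 := hx
    have hy1 : ⟪G y, y⟫ ≤ 1 := hy
    have h2 : ⟪G y, x⟫ ≤ 1 := by nlinarith
    rw [real_inner_comm]; exact h2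
  have hE : E = polarSet ((G : X → X) '' E) := by
    ext y
    constructor
    · intro hy z hz
      rcases hz with ⟨w, hw, rfl⟩
      exact key y hy w hw
    · intro hy
      show ⟪G y, y⟫ ≤ 1
      rcases eq_or_ne y 0 with rfl | hy0
      · simp
      · have ha : 0 < ⟪G y, y⟫ := hpd y hy0
        set a := ⟪G y, y⟫ with hadef
        have hsq : 0 < Real.sqrt a := Real.sqrt_pos.mpr ha
        set s := (Real.sqrt a)⁻¹ with hsdef
        have hmul : Real.sqrt a * Real.sqrt a = a := Real.mul_self_sqrt ha.le
        have hcE : ((s • y : X)) ∈ E := by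
          show ⟪G (s • y), s • y⟫ ≤ 1
          rw [map_smul, inner_smul_left, inner_smul_right]
          have : s * (s * a) = 1 := by
            rw [hsdef]
            field_simp
            rw [Real.sq_sqrt ha.le]
          simp only [RCLike.conj_to_real, ← hadef]
          rw [this]
        have hle := hy (G (s • y)) ⟨s • y, hcE, rfl⟩
        have hyy : ⟪y, G (s • y)⟫ = s * a := by
          rw [map_smul, inner_smul_right, real_inner_comm]
        have hsa1 : Real.sqrt a ≤ 1 := by
          have : s * a = Real.sqrt a := by
            rw [hsdef]
            field_simp
            rw [Real.sq_sqrt ha.le]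
          rw [hyy, this] at hle
          exact hle
        nlinarith [hmul]
  constructor
  · intro hC
    have hCE : C ⊆ E := by
      intro c hc
      have hc' : c ∈ polarSet ((G : X → X) '' C) := hC ▸ hc
      have := hc' (G c) ⟨c, hc, rfl⟩
      show ⟪G c, c⟫ ≤ 1
      rwa [real_inner_comm]
    have hEC : E ⊆ C := by
      rw [hC]
      intro y hy z hz
      rcases hz with ⟨w, hw, rfl⟩
      have hy' : y ∈ polarSet ((G : X → X) '' E) := hE ▸ hy
      exact hy' (G w) ⟨w, hCE hw, rfl⟩
    exact Set.Subset.antisymm hCE hEC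
  · intro hC
    rw [hC]
    exact hE
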